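/- Fix a positive integer d and v ∈ I(d). An element w of I(d,2d) with w ≥ v belongs to I(d) if and only if the corresponding distinguished subset 𝔖_w of N(v) is symmetric and contains an even number of elements of the diagonal D(v). -/

import Mathlib

namespace OG

/-- `star d k = k* = 2d+1-k`. -/
def star (d k : ℕ) : ℕ := 2 * d + 1 - k

/-- `I(d,2d)`: the set of `d`-element subsets of `{1,…,2d}`. -/
def Idn (d : ℕ) : Set (Finset ℕ) :=
  {v | v.card = d ∧ ∀ k ∈ v, 1 ≤ k ∧ k ≤ 2 * d}

/-- The partial order on `I(d,2d)`: entrywise comparison of increasing enumerations. -/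
def leI (x y : Finset ℕ) : Prop :=
  List.Forall₂ (· ≤ ·) (x.sort (· ≤ ·)) (y.sort (· ≤ ·))

/-- `I(d)`: elements of `I(d,2d)` containing exactly one of `k`, `k*` for each `k`,
with evenly many entries exceeding `d`. -/
def Iset (d : ℕ) : Set (Finset ℕ) :=
  {v | v ∈ Idn d ∧ (∀ k, 1 ≤ k → k ≤ 2 * d → (k ∈ v ↔ star d k ∉ v)) ∧
       Even ((v.filter (fun k => d < k)).card)}

/-- membership in `N(v)`. -/
def inN (d : ℕ) (v : Finset ℕ) (p : ℕ × ℕ) : Prop :=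
  1 ≤ p.1 ∧ p.1 ≤ 2 * d ∧ 1 ≤ p.2 ∧ p.2 ≤ 2 * d ∧ p.1 ∉ v ∧ p.2 ∈ v ∧ p.2 < p.1

/-- membership in `OR(v)`. -/
def inOR (d : ℕ) (v : Finset ℕ) (p : ℕ × ℕ) : Prop :=
  1 ≤ p.1 ∧ p.1 ≤ 2 * d ∧ 1 ≤ p.2 ∧ p.2 ≤ 2 * d ∧ p.1 ∉ v ∧ p.2 ∈ v ∧ p.1 < star d p.2

/-- membership in `ON(v) = OR(v) ∩ N(v)`. -/
def inON (d : ℕ) (v : Finset ℕ) (p : ℕ × ℕ) : Prop := inN d v p ∧ inOR d v p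

/-- membership in the diagonal `D(v)`. -/
def inDiag (d : ℕ) (v : Finset ℕ) (p : ℕ × ℕ) : Prop :=
  p.1 ∉ v ∧ p.2 ∈ v ∧ p.1 = star d p.2

instance (d : ℕ) (v : Finset ℕ) : DecidablePred (inN d v) := fun p => by
  unfold inN; infer_instance

instance (d : ℕ) (v : Finset ℕ) : DecidablePred (inOR d v) := fun p => by
  unfold inOR; infer_instance

instance (d : ℕ) (v : Finset ℕ) : DecidablePred (inON d v) := fun p => by
  unfold inON; infer_instance

instance (d : ℕ) (v : Finset ℕ) : DecidablePred (inDiag d v) := fun p => by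
  unfold inDiag; infer_instance

/-- `(R,C) > (r,c)` iff `R > r` and `C < c`. -/
def pgt (A B : ℕ × ℕ) : Prop := B.1 < A.1 ∧ A.2 < B.2

instance : DecidableRel pgt := fun A B => by unfold pgt; infer_instance

/-- `(R,C)` dominates `(r,c)` iff `R ≥ r` and `C ≤ c`. -/
def pdom (A B : ℕ × ℕ) : Prop := B.1 ≤ A.1 ∧ A.2 ≤ B.2

/-- vertical projection `p_v(r,c) = (c*,c)`. -/
def pv (d : ℕ) (α : ℕ × ℕ) : ℕ × ℕ := (star d α.2, α.2)

/-- horizontal projection `p_h(r,c) = (r,r*)`. -/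
def ph (d : ℕ) (α : ℕ × ℕ) : ℕ × ℕ := (α.1, star d α.1)

/-- `(r,c)^# = (c*,r*)`. -/
def hash (d : ℕ) (α : ℕ × ℕ) : ℕ × ℕ := (star d α.2, star d α.1)

/-- A `v`-chain: a strictly decreasing (under `pgt`) list of elements of `ON(v)`. -/
def IsVChain (d : ℕ) (v : Finset ℕ) (C : List (ℕ × ℕ)) : Prop :=
  C.Chain' pgt ∧ ∀ α ∈ C, inON d v α

/-- Two consecutive elements `(r,c) > (R,C)` of a `v`-chain are connected
if `r* ≥ C` and `R > r*`. -/
def Connected (d : ℕ) (α β : ℕ × ℕ) : Prop :=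
  β.2 ≤ star d α.1 ∧ star d α.1 < β.1

instance (d : ℕ) : ∀ α β, Decidable (Connected d α β) := fun α β => by
  unfold Connected; infer_instance

/-- The connected components of a `v`-chain. -/
def components (d : ℕ) (C : List (ℕ × ℕ)) : List (List (ℕ × ℕ)) :=
  C.splitBy (fun a b => decide (Connected d a b))

/-- The three possible types of an element of a `v`-chain. -/
inductive VType | V | H | S
deriving DecidableEq

/-- The type of an element `α` of a `v`-chain `C`: type V if `α` is not the last element
of its connected component or that component has even cardinality; otherwise type H if
`p_h(α) ∈ N(v)` (i.e. `r > r*`) and type S if not. -/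
def typeOf (d : ℕ) (C : List (ℕ × ℕ)) (α : ℕ × ℕ) : VType :=
  match (components d C).find? (fun g => decide (α ∈ g)) with
  | some g =>
      if g.getLast? = some α ∧ Odd g.length then
        (if star d α.1 < α.1 then VType.H else VType.S)
      else VType.V
  | none => VType.V

/-- `𝔖_{C,α}`. -/
def SCa (d : ℕ) (C : List (ℕ × ℕ)) (α : ℕ × ℕ) : Multiset (ℕ × ℕ) :=
  match typeOf d C α with
  | VType.V => {pv d α}
  | VType.H => {pv d α, ph d α}
  | VType.S => {α, hash d α}

/-- `𝔖_C`: the multiset union of the `𝔖_{C,α}` over `α ∈ C`. -/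
def SC (d : ℕ) (C : List (ℕ × ℕ)) : Multiset (ℕ × ℕ) :=
  (C.map (fun α => SCa d C α)).sum

/-- `q_{C,α}`. -/
def qCa (d : ℕ) (C : List (ℕ × ℕ)) (α : ℕ × ℕ) : ℕ × ℕ :=
  match typeOf d C α with
  | VType.S => α
  | _ => pv d α

/-- A strictly decreasing chain of elements of the monomial `S`. -/
def IsChainIn (S : Multiset (ℕ × ℕ)) (L : List (ℕ × ℕ)) : Prop :=
  L.Chain' pgt ∧ ∀ β ∈ L, β ∈ S

/-- The depth of `α` in a monomial `S` of `N(v)`: the maximal length of a strictly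
decreasing chain of elements of `S` ending at `α`. -/
noncomputable def depth (S : Multiset (ℕ × ℕ)) (α : ℕ × ℕ) : ℕ :=
  sSup {k | ∃ L, IsChainIn S L ∧ L.getLast? = some α ∧ L.length = k}

/-- The o-depth of `α` in a `v`-chain `C`: the depth of `q_{C,α}` in `𝔖_C`. -/
noncomputable def odepthC (d : ℕ) (C : List (ℕ × ℕ)) (α : ℕ × ℕ) : ℕ :=
  depth (SC d C) (qCa d C α)

/-- The o-depth of `α` in a monomial `S` of `ON(v)`: the maximum of `odepthC` over
all `v`-chains in `S` containing `α`. -/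
noncomputable def odepthM (d : ℕ) (v : Finset ℕ) (S : Multiset (ℕ × ℕ)) (α : ℕ × ℕ) : ℕ :=
  sSup {k | ∃ C, IsVChain d v C ∧ (∀ β ∈ C, β ∈ S) ∧ α ∈ C ∧ odepthC d C α = k}

/-- A distinguished subset of `N(v)`. -/
def Distinguished (d : ℕ) (v : Finset ℕ) (S : Finset (ℕ × ℕ)) : Prop :=
  (∀ p ∈ S, inN d v p) ∧
  ∀ A ∈ S, ∀ B ∈ S, A ≠ B →
    A.1 ≠ B.1 ∧ A.2 ≠ B.2 ∧ (B.1 < A.1 → (B.1 < A.2 ∨ A.2 < B.2))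

/-- The element of `I(d,2d)` attached to a distinguished subset `S` of `N(v)`:
remove from `v` the column indices of elements of `S` and add their row indices. -/
def toW (v : Finset ℕ) (S : Finset (ℕ × ℕ)) : Finset ℕ :=
  (v \ S.image Prod.snd) ∪ S.image Prod.fst

/-- `w(C) = w_C`, the element of `I(d,2d)` attached to the `v`-chain `C` via the
distinguished subset `𝔖_C`. -/
def wC (d : ℕ) (v : Finset ℕ) (C : List (ℕ × ℕ)) : Finset ℕ :=
  toW v (SC d C).toFinset

/-- `w` ortho-dominates a monomial `S` in `ON(v)`: `w ≥ w(C)` for every `v`-chain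
`C` contained in `S`. -/
def ODominates (d : ℕ) (v w : Finset ℕ) (S : Multiset (ℕ × ℕ)) : Prop :=
  ∀ C : List (ℕ × ℕ), IsVChain d v C → (∀ β ∈ C, β ∈ S) → leI (wC d v C) w

/-- `x` dominates a monomial `S` in `N(v)` (in the sense of the Grassmannian case):
`x ≥ w_L` for every strictly decreasing chain `L` contained in `S`. -/
def Dominates (d : ℕ) (v x : Finset ℕ) (S : Multiset (ℕ × ℕ)) : Prop :=
  ∀ L : List (ℕ × ℕ), L.Chain' pgt → (∀ β ∈ L, β ∈ S) → leI (toW v L.toFinset) x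

/-- The `v`-degree of `θ`: half the cardinality of `v \ θ`. -/
def vdeg (v θ : Finset ℕ) : ℕ := (v \ θ).card / 2

/-- the element next to `α` in the list `C`. -/
def nextInC (C : List (ℕ × ℕ)) (α : ℕ × ℕ) : Option (ℕ × ℕ) :=
  C[C.idxOf α + 1]?

/-- The critical element of a `v`-chain: its first element whose horizontal projection
does not belong to `N(v)` (i.e. with `r ≤ r*`). -/
def critical (d : ℕ) (C : List (ℕ × ℕ)) : Option (ℕ × ℕ) :=
  C.find? (fun x => decide (x.1 ≤ star d x.1))

/-- `α` is the last element of its connected component in `C`. -/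
def isCompLast (d : ℕ) (C : List (ℕ × ℕ)) (α : ℕ × ℕ) : Prop :=
  ∃ g ∈ components d C, g.getLast? = some α

/-- The condition (*): `α` has type H in `C` and `p_h(α) ≯ β'` for some `β' ∈ 𝔖_{C,β}`. -/
def starCond (d : ℕ) (C : List (ℕ × ℕ)) (α β : ℕ × ℕ) : Prop :=
  typeOf d C α = VType.H ∧ ∃ β' ∈ SCa d C β, ¬ pgt (ph d α) β'

/-- A standard monomial in `I(d)`: a weakly decreasing sequence of elements of `I(d)`. -/
def IsStdMon (d : ℕ) (L : List (Finset ℕ)) : Prop :=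
  (∀ θ ∈ L, θ ∈ Iset d) ∧ L.Chain' (fun a b => leI b a)

/-- A standard monomial is `w`-dominated if `w ≥ θ₁`. -/
def WDominated (w : Finset ℕ) (L : List (Finset ℕ)) : Prop :=
  ∀ θ, L.head? = some θ → leI θ w

/-- A standard monomial is `v`-compatible if each member is comparable with `v`
and distinct from `v`. -/
def VCompatible (v : Finset ℕ) (L : List (Finset ℕ)) : Prop :=
  ∀ θ ∈ L, θ ≠ v ∧ (leI θ v ∨ leI v θ)

/-- The degree of a standard monomial: the sum of the `v`-degrees of its members. -/
def stdDeg (v : Finset ℕ) (L : List (Finset ℕ)) : ℕ :=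
  (L.map (fun θ => vdeg v θ)).sum

end OG


namespace OG

variable {d : ℕ} {v : Finset ℕ} {S : Finset (ℕ × ℕ)}

lemma star_star' {k : ℕ} (hk : k ≤ 2 * d) : star d (star d k) = k := by
  unfold star; omega

lemma star_le' {k : ℕ} (h1 : 1 ≤ k) (h2 : k ≤ 2 * d) :
    1 ≤ star d k ∧ star d k ≤ 2 * d := by
  unfold star; omega

lemma star_inj' {a b : ℕ} (ha : a ≤ 2 * d) (hb : b ≤ 2 * d)
    (h : star d a = star d b) : a = b := by
  unfold star at h; omega

lemma image_erase_injOn' {α β : Type*} [DecidableEq α] [DecidableEq β] {f : α → β}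
    {s : Finset α} (hf : Set.InjOn f s) {a : α} (ha : a ∈ s) :
    (s.erase a).image f = (s.image f).erase (f a) := by
  ext b
  simp only [Finset.mem_image, Finset.mem_erase]
  constructor
  · rintro ⟨x, ⟨hxa, hxs⟩, rfl⟩
    exact ⟨fun h => hxa (hf hxs ha h), x, hxs, rfl⟩
  · rintro ⟨hb, x, hxs, rfl⟩
    exact ⟨x, ⟨fun h => hb (by rw [h]), hxs⟩, rfl⟩

lemma dist_mono (h : Distinguished d v S) {T : Finset (ℕ × ℕ)} (hT : T ⊆ S) :
    Distinguished d v T :=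
  ⟨fun p hp => h.1 p (hT hp), fun A hA B hB => h.2 A (hT hA) B (hT hB)⟩

lemma fst_injOn (h : Distinguished d v S) : Set.InjOn Prod.fst (↑S : Set (ℕ × ℕ)) := by
  intro p hp q hq he
  by_contra hne
  exact (h.2 p (Finset.mem_coe.mp hp) q (Finset.mem_coe.mp hq) hne).1 he

lemma snd_injOn (h : Distinguished d v S) : Set.InjOn Prod.snd (↑S : Set (ℕ × ℕ)) := by
  intro p hp q hq he
  by_contra hne
  exact (h.2 p (Finset.mem_coe.mp hp) q (Finset.mem_coe.mp hq) hne).2.1 he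

lemma distinguished_eq_of_images :
    ∀ (n : ℕ) (S T : Finset (ℕ × ℕ)), S.card ≤ n →
      Distinguished d v S → Distinguished d v T →
      S.image Prod.snd = T.image Prod.snd → S.image Prod.fst = T.image Prod.fst →
      S = T := by
  intro n
  induction n with
  | zero =>
    intro S T hc _ _ _ hfst
    have hS : S = ∅ := Finset.card_eq_zero.mp (Nat.le_zero.mp hc)
    subst hS
    simp only [Finset.image_empty] at hfst
    exact (Finset.image_eq_empty.mp hfst.symm).symm
  | succ n ih =>
    intro S T hc hS hT hsnd hfst
    rcases Finset.eq_empty_or_nonempty S with hSe | hSne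
    · subst hSe
      simp only [Finset.image_empty] at hfst
      exact (Finset.image_eq_empty.mp hfst.symm).symm
    have hRne : (S.image Prod.fst).Nonempty := hSne.image _
    set r₀ := (S.image Prod.fst).min' hRne with hr₀
    have key : ∀ (X : Finset (ℕ × ℕ)), Distinguished d v X →
        X.image Prod.fst = S.image Prod.fst → ∀ x ∈ X, x.1 = r₀ →
        x.2 < r₀ ∧ ∀ l ∈ X.image Prod.snd, l < r₀ → l ≤ x.2 := by
      intro X hX hXf x hx hx1
      constructor
      · have := (hX.1 x hx).2.2.2.2.2.2
        omega
      · intro l hl hlr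
        obtain ⟨y, hy, rfl⟩ := Finset.mem_image.mp hl
        by_cases hxy : y = x
        · subst hxy; exact le_rfl
        · have h1 : y.1 ∈ S.image Prod.fst := by
            rw [← hXf]; exact Finset.mem_image_of_mem Prod.fst hy
          have h2 : r₀ ≤ y.1 := Finset.min'_le _ _ h1
          have hne : y.1 ≠ x.1 := (hX.2 y hy x hx hxy).1
          have h3 := (hX.2 y hy x hx hxy).2.2
          have hxlt : x.1 < y.1 := by omega
          rcases h3 hxlt with h | h <;> omega
    obtain ⟨p, hp, hp1⟩ := Finset.mem_image.mp (Finset.min'_mem _ hRne)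
    have hr₀T : r₀ ∈ T.image Prod.fst := by rw [← hfst]; exact Finset.min'_mem _ hRne
    obtain ⟨q, hq, hq1⟩ := Finset.mem_image.mp hr₀T
    have hkS := key S hS rfl p hp hp1
    have hkT := key T hT hfst.symm q hq hq1
    have hpq : p = q := by
      have h2S : p.2 ∈ T.image Prod.snd := by
        rw [← hsnd]; exact Finset.mem_image_of_mem _ hp
      have h2T : q.2 ∈ S.image Prod.snd := by
        rw [hsnd]; exact Finset.mem_image_of_mem _ hq
      have e2 : p.2 = q.2 :=
        le_antisymm (hkT.2 p.2 h2S hkS.1) ((hkS.2 q.2 (by rw [hsnd]; exact Finset.mem_image_of_mem _ hq) hkT.1))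
      exact Prod.ext (hp1.trans hq1.symm) e2
    have hq' : p ∈ T := by rw [hpq]; exact hq
    have hmain : S.erase p = T.erase p := by
      apply ih
      · have := Finset.card_erase_of_mem hp
        omega
      · exact dist_mono hS (Finset.erase_subset _ _)
      · exact dist_mono hT (Finset.erase_subset _ _)
      · rw [image_erase_injOn' (snd_injOn hS) hp, image_erase_injOn' (snd_injOn hT) hq', hsnd]
      · rw [image_erase_injOn' (fst_injOn hS) hp, image_erase_injOn' (fst_injOn hT) hq', hfst]
    have := congrArg (insert p) hmain
    rwa [Finset.insert_erase hp, Finset.insert_erase hq'] at this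

lemma hash_inN (hv : v ∈ Iset d) {p : ℕ × ℕ} (hp : inN d v p) : inN d v (hash d p) := by
  obtain ⟨h1, h2, h3, h4, h5, h6, h7⟩ := hp
  have hsv2 := hv.2.1 p.2 h3 h4
  have hsv1 := hv.2.1 p.1 h1 h2
  refine ⟨?_, ?_, ?_, ?_, ?_, ?_, ?_⟩ <;>
    simp only [hash, inN] <;>
    first
      | (unfold star; omega)
      | tauto

lemma dist_hash (hv : v ∈ Iset d) (hS : Distinguished d v S) :
    Distinguished d v (S.image (hash d)) := by
  constructor
  · intro p hp
    obtain ⟨q, hq, rfl⟩ := Finset.mem_image.mp hp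
    exact hash_inN hv (hS.1 q hq)
  · intro A hA B hB hAB
    obtain ⟨p, hp, rfl⟩ := Finset.mem_image.mp hA
    obtain ⟨q, hq, rfl⟩ := Finset.mem_image.mp hB
    have hpq : p ≠ q := fun h => hAB (by rw [h])
    obtain ⟨e1, e2, e3, e4, e5, e6, e7⟩ := hS.1 p hp
    obtain ⟨f1, f2, f3, f4, f5, f6, f7⟩ := hS.1 q hq
    obtain ⟨g1, g2, g3⟩ := hS.2 p hp q hq hpq
    obtain ⟨k1, k2, k3⟩ := hS.2 q hq p hp hpq.symm
    simp only [hash]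
    refine ⟨?_, ?_, ?_⟩
    · intro h; exact g2 (star_inj' e4 f4 h)
    · intro h; exact g1 (star_inj' e2 f2 h)
    · intro hlt
      have hc : p.2 < q.2 := by unfold star at hlt; omega
      by_contra hcon
      push_neg at hcon
      obtain ⟨u1, u2⟩ := hcon
      have w1 : q.2 ≤ p.1 := by unfold star at u1; omega
      have w2 : p.1 ≤ q.1 := by unfold star at u2; omega
      have hlt2 : p.1 < q.1 := by
        rcases Nat.lt_or_ge p.1 q.1 with h | h
        · exact h
        · exact absurd (le_antisymm w2 h) k1.symm
      rcases k3 hlt2 with h | h <;> omega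

lemma image_star_star {X : Finset ℕ} (hX : ∀ x ∈ X, x ≤ 2 * d) :
    (X.image (star d)).image (star d) = X := by
  rw [Finset.image_image]
  have h : X.image (star d ∘ star d) = X.image id :=
    Finset.image_congr (fun x hx => star_star' (hX x (Finset.mem_coe.mp hx)))
  rw [h, Finset.image_id]

lemma symm_of_rows_eq (hv : v ∈ Iset d) (hS : Distinguished d v S)
    (hrl : S.image Prod.fst = (S.image Prod.snd).image (star d)) :
    S.image (hash d) = S := by
  have hbnd : ∀ x ∈ S.image Prod.snd, x ≤ 2 * d := by
    intro x hx
    obtain ⟨p, hp, rfl⟩ := Finset.mem_image.mp hx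
    exact (hS.1 p hp).2.2.2.1
  have hTd : Distinguished d v (S.image (hash d)) := dist_hash hv hS
  have hfstT : (S.image (hash d)).image Prod.fst = S.image Prod.fst := by
    rw [Finset.image_image]
    have h1 : S.image (Prod.fst ∘ hash d) = (S.image Prod.snd).image (star d) := by
      rw [Finset.image_image]; rfl
    rw [h1, ← hrl]
  have hsndT : (S.image (hash d)).image Prod.snd = S.image Prod.snd := by
    rw [Finset.image_image]
    have h1 : S.image (Prod.snd ∘ hash d) = (S.image Prod.fst).image (star d) := by
      rw [Finset.image_image]; rfl
    rw [h1, hrl, image_star_star hbnd]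
  exact distinguished_eq_of_images (S.image (hash d)).card (S.image (hash d)) S
    le_rfl hTd hS hsndT hfstT

lemma rows_not_mem_v (hS : Distinguished d v S) {k : ℕ} (hk : k ∈ v) :
    k ∉ S.image Prod.fst := by
  intro h
  obtain ⟨p, hp, rfl⟩ := Finset.mem_image.mp h
  exact (hS.1 p hp).2.2.2.2.1 hk

lemma cols_mem_v (hS : Distinguished d v S) {k : ℕ} (hk : k ∈ S.image Prod.snd) :
    k ∈ v := by
  obtain ⟨p, hp, rfl⟩ := Finset.mem_image.mp hk
  exact (hS.1 p hp).2.2.2.2.2.1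

lemma mem_toW_of_mem_v (hS : Distinguished d v S) {k : ℕ} (hk : k ∈ v) :
    k ∈ toW v S ↔ k ∉ S.image Prod.snd := by
  have h2 := rows_not_mem_v hS hk
  simp [toW, hk, h2]

lemma mem_toW_of_not_mem_v (hS : Distinguished d v S) {k : ℕ} (hk : k ∉ v) :
    k ∈ toW v S ↔ k ∈ S.image Prod.fst := by
  simp [toW, hk]

lemma condA_iff (hv : v ∈ Iset d) (hS : Distinguished d v S) :
    (∀ k, 1 ≤ k → k ≤ 2 * d → (k ∈ toW v S ↔ star d k ∉ toW v S)) ↔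
      S.image Prod.fst = (S.image Prod.snd).image (star d) := by
  constructor
  · intro hcond
    ext r
    constructor
    · intro hr
      obtain ⟨p, hp, rfl⟩ := Finset.mem_image.mp hr
      obtain ⟨h1, h2, h3, h4, h5, h6, h7⟩ := hS.1 p hp
      have hw1 : p.1 ∈ toW v S := by
        rw [mem_toW_of_not_mem_v hS h5]
        exact Finset.mem_image_of_mem _ hp
      have hw2 : star d p.1 ∉ toW v S := (hcond p.1 h1 h2).mp hw1
      have hstv : star d p.1 ∈ v := by
        have := hv.2.1 p.1 h1 h2
        tauto
      have hcol : star d p.1 ∈ S.image Prod.snd := by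
        by_contra hcon
        exact hw2 ((mem_toW_of_mem_v hS hstv).mpr hcon)
      refine Finset.mem_image.mpr ⟨star d p.1, hcol, star_star' h2⟩
    · intro hr
      obtain ⟨c, hc, rfl⟩ := Finset.mem_image.mp hr
      obtain ⟨p, hp, rfl⟩ := Finset.mem_image.mp hc
      obtain ⟨h1, h2, h3, h4, h5, h6, h7⟩ := hS.1 p hp
      have hcv : p.2 ∈ v := h6
      have hnw : p.2 ∉ toW v S := by
        rw [mem_toW_of_mem_v hS hcv]
        intro hcon
        exact hcon (Finset.mem_image_of_mem _ hp)
      have hw2 : star d p.2 ∈ toW v S := by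
        have := hcond p.2 h3 h4
        tauto
      have hnv : star d p.2 ∉ v := (hv.2.1 p.2 h3 h4).mp hcv
      rwa [mem_toW_of_not_mem_v hS hnv] at hw2
  · intro himg k hk1 hk2
    have hvk := hv.2.1 k hk1 hk2
    by_cases hkv : k ∈ v
    · have hkv' : star d k ∉ v := hvk.mp hkv
      rw [mem_toW_of_mem_v hS hkv, mem_toW_of_not_mem_v hS hkv', himg]
      have : star d k ∈ (S.image Prod.snd).image (star d) ↔ k ∈ S.image Prod.snd := by
        constructor
        · intro h
          obtain ⟨c, hc, hceq⟩ := Finset.mem_image.mp h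
          have hcb : c ≤ 2 * d := by
            obtain ⟨p, hp, rfl⟩ := Finset.mem_image.mp hc
            exact (hS.1 p hp).2.2.2.1
          rwa [← star_inj' hcb hk2 hceq]
        · intro h
          exact Finset.mem_image_of_mem _ h
      rw [this]
    · have hkv' : star d k ∈ v := by tauto
      rw [mem_toW_of_not_mem_v hS hkv, mem_toW_of_mem_v hS hkv', himg]
      have : k ∈ (S.image Prod.snd).image (star d) ↔ star d k ∈ S.image Prod.snd := by
        constructor
        · intro h
          obtain ⟨c, hc, hceq⟩ := Finset.mem_image.mp h
          have hcb : c ≤ 2 * d := by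
            obtain ⟨p, hp, rfl⟩ := Finset.mem_image.mp hc
            exact (hS.1 p hp).2.2.2.1
          rw [← hceq, star_star' hcb]
          exact hc
        · intro h
          refine Finset.mem_image.mpr ⟨star d k, h, star_star' hk2⟩
      rw [this, not_not]

lemma hash_hash (hS : Distinguished d v S) {p : ℕ × ℕ} (hp : p ∈ S) :
    hash d (hash d p) = p := by
  obtain ⟨h1, h2, h3, h4, h5, h6, h7⟩ := hS.1 p hp
  simp only [hash]
  exact Prod.ext (star_star' h2) (star_star' h4)

lemma diag_iff_fixed (hS : Distinguished d v S) {p : ℕ × ℕ} (hp : p ∈ S) :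
    inDiag d v p ↔ hash d p = p := by
  obtain ⟨h1, h2, h3, h4, h5, h6, h7⟩ := hS.1 p hp
  constructor
  · rintro ⟨_, _, hdg⟩
    simp only [hash, Prod.ext_iff]
    constructor
    · exact hdg.symm
    · rw [hdg, star_star' h4]
  · intro h
    refine ⟨h5, h6, ?_⟩
    have := congrArg Prod.fst h
    simp only [hash] at this
    exact this.symm

lemma even_card_of_invol :
    ∀ (n : ℕ) (B : Finset (ℕ × ℕ)) (f : ℕ × ℕ → ℕ × ℕ), B.card ≤ n →
      (∀ a ∈ B, f a ∈ B) → (∀ a ∈ B, f (f a) = a) → (∀ a ∈ B, f a ≠ a) →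
      Even B.card := by
  intro n
  induction n with
  | zero =>
    intro B f hc _ _ _
    have : B.card = 0 := Nat.le_zero.mp hc
    rw [this]; exact Even.zero
  | succ n ih =>
    intro B f hc hmem hinv hne
    rcases Finset.eq_empty_or_nonempty B with hBe | ⟨a, ha⟩
    · rw [hBe]; simp
    have hfa : f a ∈ B := hmem a ha
    have hfa' : f a ≠ a := hne a ha
    set B' := (B.erase a).erase (f a) with hB'
    have hfaea : f a ∈ B.erase a := Finset.mem_erase.mpr ⟨hfa', hfa⟩
    have hcard : B'.card + 2 = B.card := by
      rw [hB', Finset.card_erase_of_mem hfaea, Finset.card_erase_of_mem ha]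
      have h1 : 0 < B.card := Finset.card_pos.mpr ⟨a, ha⟩
      have h2 : 0 < (B.erase a).card := Finset.card_pos.mpr ⟨f a, hfaea⟩
      rw [Finset.card_erase_of_mem ha] at h2
      omega
    have hsub : B' ⊆ B := fun x hx =>
      Finset.mem_of_mem_erase (Finset.mem_of_mem_erase hx)
    have hmem' : ∀ b ∈ B', f b ∈ B' := by
      intro b hb
      have hbB : b ∈ B := hsub hb
      have hb1 : b ≠ f a := (Finset.mem_erase.mp hb).1
      have hb2 : b ≠ a := (Finset.mem_erase.mp (Finset.mem_of_mem_erase hb)).1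
      refine Finset.mem_erase.mpr ⟨?_, Finset.mem_erase.mpr ⟨?_, hmem b hbB⟩⟩
      · intro h
        exact hb2 (by rw [← hinv b hbB, h, hinv a ha])
      · intro h
        exact hb1 (by rw [← hinv b hbB, h])
    have hE : Even B'.card := by
      apply ih B' f (by omega) hmem'
      · intro b hb; exact hinv b (hsub hb)
      · intro b hb; exact hne b (hsub hb)
    rw [← hcard]
    exact hE.add even_two

lemma parity_iff (hv : v ∈ Iset d) (hS : Distinguished d v S)
    (hsym : S.image (hash d) = S) :
    Even (((toW v S).filter (fun k => d < k)).card) ↔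
      Even ((S.filter (inDiag d v)).card) := by
  -- cols ⊆ v, rows disjoint from v
  have hcols : S.image Prod.snd ⊆ v := fun k hk => cols_mem_v hS hk
  have hrows : Disjoint (S.image Prod.fst) (v \ S.image Prod.snd) := by
    rw [Finset.disjoint_left]
    intro k hk hk2
    exact rows_not_mem_v hS (Finset.mem_sdiff.mp hk2).1 hk
  have hcolsd : Disjoint (S.image Prod.snd) (v \ S.image Prod.snd) := by
    rw [Finset.disjoint_left]
    intro k hk hk2
    exact (Finset.mem_sdiff.mp hk2).2 hk
  -- decomposition of v
  have hvdec : (v.filter (fun k => d < k)).card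
      = ((v \ S.image Prod.snd).filter (fun k => d < k)).card + ((S.image Prod.snd).filter (fun k => d < k)).card := by
    rw [← Finset.card_union_of_disjoint (Finset.disjoint_filter_filter hcolsd.symm),
      ← Finset.filter_union, Finset.sdiff_union_of_subset hcols]
  have hwdec : ((toW v S).filter (fun k => d < k)).card
      = ((v \ S.image Prod.snd).filter (fun k => d < k)).card + ((S.image Prod.fst).filter (fun k => d < k)).card := by
    rw [toW, Finset.filter_union,
      Finset.card_union_of_disjoint (Finset.disjoint_filter_filter hrows.symm)]
  -- card of filtered images
  have hcfst : ((S.image Prod.fst).filter (fun k => d < k)).card = (S.filter (fun p => d < p.1)).card := by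
    rw [Finset.filter_image]
    exact Finset.card_image_of_injOn
      ((fst_injOn hS).mono (by intro x hx; exact (Finset.mem_filter.mp hx).1))
  have hcsnd : ((S.image Prod.snd).filter (fun k => d < k)).card = (S.filter (fun p => d < p.2)).card := by
    rw [Finset.filter_image]
    exact Finset.card_image_of_injOn
      ((snd_injOn hS).mono (by intro x hx; exact (Finset.mem_filter.mp hx).1))
  -- the bijection via hash
  have hmemS : ∀ p ∈ S, hash d p ∈ S := by
    intro p hp
    rw [← hsym]
    exact Finset.mem_image_of_mem _ hp
  have hbij : (S.filter (fun p => d < p.2)).card = (S.filter (fun p => ¬ d < p.1)).card := by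
    apply Finset.card_bij' (fun p _ => hash d p) (fun p _ => hash d p)
    · intro a ha
      obtain ⟨haS, haP⟩ := Finset.mem_filter.mp ha
      obtain ⟨h1, h2, h3, h4, h5, h6, h7⟩ := hS.1 a haS
      refine Finset.mem_filter.mpr ⟨hmemS a haS, ?_⟩
      simp only [hash]
      unfold star
      omega
    · intro a ha
      obtain ⟨haS, haP⟩ := Finset.mem_filter.mp ha
      obtain ⟨h1, h2, h3, h4, h5, h6, h7⟩ := hS.1 a haS
      refine Finset.mem_filter.mpr ⟨hmemS a haS, ?_⟩
      simp only [hash] at haP ⊢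
      unfold star
      omega
    · intro a ha
      exact hash_hash hS (Finset.mem_filter.mp ha).1
    · intro a ha
      exact hash_hash hS (Finset.mem_filter.mp ha).1
  have hsplit : (S.filter (fun p => d < p.1)).card + (S.filter (fun p => ¬ d < p.1)).card
      = S.card := Finset.card_filter_add_card_filter_not _
  -- diagonal split
  have hdsplit : (S.filter (inDiag d v)).card + (S.filter (fun p => ¬ inDiag d v p)).card
      = S.card := Finset.card_filter_add_card_filter_not _
  have hndeven : Even ((S.filter (fun p => ¬ inDiag d v p)).card) := by
    apply even_card_of_invol (S.filter (fun p => ¬ inDiag d v p)).card _ (hash d) le_rfl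
    · intro a ha
      obtain ⟨haS, haD⟩ := Finset.mem_filter.mp ha
      refine Finset.mem_filter.mpr ⟨hmemS a haS, ?_⟩
      intro hcon
      have hfix : hash d (hash d a) = hash d a :=
        (diag_iff_fixed hS (hmemS a haS)).mp hcon
      rw [hash_hash hS haS] at hfix
      exact haD ((diag_iff_fixed hS haS).mpr hfix.symm)
    · intro a ha
      exact hash_hash hS (Finset.mem_filter.mp ha).1
    · intro a ha
      obtain ⟨haS, haD⟩ := Finset.mem_filter.mp ha
      intro hcon
      exact haD ((diag_iff_fixed hS haS).mpr hcon)
  have hveven : Even ((v.filter (fun k => d < k)).card) := hv.2.2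
  rw [Nat.even_iff, Nat.even_iff]
  rw [Nat.even_iff] at hveven hndeven
  omega

end OG

open OG in
/-- `w ≥ v` in `I(d,2d)` belongs to `I(d)` iff the distinguished subset
`𝔖_w` of `N(v)` is symmetric and contains evenly many diagonal elements. -/
theorem stmt2 (d : ℕ) (hd : 0 < d) (v : Finset ℕ) (hv : v ∈ Iset d)
    (w : Finset ℕ) (hw : w ∈ Idn d) (hvw : leI v w)
    (S : Finset (ℕ × ℕ)) (hdist : Distinguished d v S) (hSw : toW v S = w) :
    w ∈ Iset d ↔ (S.image (hash d) = S ∧ Even ((S.filter (inDiag d v)).card)) := by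
  subst hSw
  constructor
  · rintro ⟨hIdn, hcond, heven⟩
    have hrl : S.image Prod.fst = (S.image Prod.snd).image (star d) :=
      (condA_iff hv hdist).mp hcond
    have hsym := symm_of_rows_eq hv hdist hrl
    exact ⟨hsym, (parity_iff hv hdist hsym).mp heven⟩
  · rintro ⟨hsym, hdiag⟩
    have hrl : S.image Prod.fst = (S.image Prod.snd).image (star d) := by
      conv_lhs => rw [← hsym]
      rw [Finset.image_image, Finset.image_image]
      rfl
    exact ⟨hw, (condA_iff hv hdist).mpr hrl, (parity_iff hv hdist hsym).mpr hdiag⟩
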